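/- If A ∈ B(H) is bounded, injective, and self-adjoint, and g ∈ ran A, then the unique solution f to A f = g belongs to the closure of the Krylov subspace K(A,g). -/

import Mathlib

/-- Corollary 2.1: well-defined self-adjoint inverse problems are Krylov solvable:
if `A` is bounded, injective and self-adjoint and `A f = g`, then `f ∈ closure(K(A,g))`. -/
theorem stmt6 {H : Type*} [NormedAddCommGroup H] [InnerProductSpace ℂ H]
    [CompleteSpace H] (A : H →L[ℂ] H) (hA : IsSelfAdjoint A)
    (hinj : Function.Injective A) (g f : H) (hf : A f = g) :
    f ∈ (Submodule.span ℂ (Set.range fun k : ℕ => (A ^ k) g)).topologicalClosure := by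
  set S : Submodule ℂ H := Submodule.span ℂ (Set.range fun k : ℕ => (A ^ k) g) with hS
  set K : Submodule ℂ H := S.topologicalClosure with hK
  have hgS : g ∈ S := by
    apply Submodule.subset_span
    exact ⟨0, by simp⟩
  have hgK : g ∈ K := Submodule.le_topologicalClosure S hgS
  -- A maps S into S
  have hAS : ∀ x ∈ S, A x ∈ S := by
    intro x hx
    induction hx using Submodule.span_induction with
    | mem x hx =>
      obtain ⟨k, rfl⟩ := hx
      apply Submodule.subset_span
      refine ⟨k + 1, ?_⟩
      show (A ^ (k + 1)) g = A ((A ^ k) g)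
      rw [pow_succ']
      rfl
    | zero => simp
    | add x y _ _ hx hy => rw [map_add]; exact S.add_mem hx hy
    | smul c x _ hx => rw [map_smul]; exact S.smul_mem c hx
  -- A maps K into K
  have hAK : ∀ x ∈ K, A x ∈ K := by
    intro x hx
    have : A x ∈ closure (A '' (S : Set H)) :=
      map_mem_closure A.continuous hx (fun y hy => Set.mem_image_of_mem _ hy)
    refine closure_minimal ?_ S.isClosed_topologicalClosure this
    intro y ⟨z, hz, hzy⟩
    exact hzy ▸ Submodule.le_topologicalClosure S (hAS z hz)
  -- decompose f
  obtain ⟨u, hu, v, hv, huv⟩ := K.exists_add_mem_mem_orthogonal f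
  -- A v ∈ Kᗮ
  have hAv_perp : A v ∈ Kᗮ := by
    intro w hw
    show (inner ℂ w (A v) : ℂ) = 0
    have h := hA.isSymmetric w v
    simp only [ContinuousLinearMap.coe_coe] at h
    rw [← h]
    exact hv (A w) (hAK w hw)
  -- A v ∈ K
  have hAv_K : A v ∈ K := by
    have : A v = g - A u := by
      rw [← hf, huv, map_add]; abel
    rw [this]
    exact K.sub_mem hgK (hAK u hu)
  have hAv0 : A v = 0 := by
    have h := hAv_perp (A v) hAv_K
    exact inner_self_eq_zero.mp h
  have hv0 : v = 0 := hinj (by simpa using hAv0)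
  rwa [huv, hv0, add_zero]
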